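/- arXiv:2204.10134 — 3 statements merged into one kernel-verified Lean document; each statement's English description precedes it below -/
import Mathlib

section
/- For every integer n ≥ 6, the complement of the wheel graph W_n on n vertices (the join of a single vertex with a cycle on n−1 vertices) contains a complete graph on ⌊3(n−1)/4⌋ vertices as a minor. -/
set_option maxHeartbeats 1000000


open SimpleGraph

/-- `H` is a minor of `G` (branch-set / minor-model definition): each vertex of `H`
is represented by a connected branch set in `G`, branch sets are pairwise disjoint,
and edges of `H` are realized by edges between the corresponding branch sets. -/
def IsMinorOf {α β : Type*} (H : SimpleGraph α) (G : SimpleGraph β) : Prop :=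
  ∃ f : α → Set β,
    (∀ a, (G.induce (f a)).Connected) ∧
    (∀ a b, a ≠ b → Disjoint (f a) (f b)) ∧
    (∀ a b, H.Adj a b → ∃ u ∈ f a, ∃ v ∈ f b, G.Adj u v)

/-- The wheel graph `W n` on `n` vertices: hub `none` joined to the cycle
`C (n-1)` on the rim vertices `some i`, `i : ZMod (n-1)`. -/
def wheelGraph (n : ℕ) : SimpleGraph (Option (ZMod (n - 1))) where
  Adj x y := x ≠ y ∧
    (x = none ∨ y = none ∨
      ∃ i j : ZMod (n - 1), x = some i ∧ y = some j ∧ (i - j = 1 ∨ j - i = 1))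
  symm := ⟨by
    rintro x y ⟨hne, h⟩
    refine ⟨hne.symm, ?_⟩
    rcases h with h | h | ⟨i, j, hx, hy, hij⟩
    · exact Or.inr (Or.inl h)
    · exact Or.inl h
    · exact Or.inr (Or.inr ⟨j, i, hy, hx, hij.symm⟩)⟩
  loopless := ⟨fun x h => h.1 rfl⟩

/-- Two rim labels `x y : ℕ` (both `< n-1`) are "good" if the corresponding rim
vertices are distinct and non-adjacent on the rim cycle. -/
def goodPair (m x y : ℕ) : Prop :=
  x ≠ y ∧ x + 1 ≠ y ∧ y + 1 ≠ x ∧ ¬(x = m - 1 ∧ y = 0) ∧ ¬(y = m - 1 ∧ x = 0)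

private lemma pair_connected {V : Type*} (G : SimpleGraph V) (x y : V)
    (h : x = y ∨ G.Adj x y) : (G.induce {x, y}).Connected := by
  have hx : x ∈ ({x, y} : Set V) := Set.mem_insert _ _
  rw [connected_iff]
  refine ⟨?_, ⟨⟨x, hx⟩⟩⟩
  have key : ∀ u : ({x, y} : Set V), (G.induce {x, y}).Reachable ⟨x, hx⟩ u := by
    rintro ⟨u, hu⟩
    rcases Set.mem_insert_iff.1 hu with rfl | hu'
    · exact Reachable.refl _
    · rcases Set.mem_singleton_iff.1 hu' with rfl
      rcases h with rfl | hadj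
      · exact Reachable.refl _
      · exact Adj.reachable (by simpa using hadj)
  intro u v
  exact (key u).symm.trans (key v)

private lemma cast_inj_of_lt {m : ℕ} [NeZero m] {u v : ℕ} (hu : u < m) (hv : v < m)
    (h : (u : ZMod m) = v) : u = v := by
  have := congrArg ZMod.val h
  rwa [ZMod.val_cast_of_lt hu, ZMod.val_cast_of_lt hv] at this

private lemma good_adj {n : ℕ} (hn : 6 ≤ n) {x y : ℕ} (hx : x < n - 1) (hy : y < n - 1)
    (h : goodPair (n - 1) x y) :
    (wheelGraph n)ᶜ.Adj (some ((x : ZMod (n - 1)))) (some ((y : ZMod (n - 1)))) := by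
  obtain ⟨h1, h2, h3, h4, h5⟩ := h
  haveI : NeZero (n - 1) := ⟨by omega⟩
  have modeq : ∀ u v : ℕ, u < n - 1 → v < n - 1 → ((u : ZMod (n - 1)) - v = 1) →
      (u = v + 1 ∨ (u = 0 ∧ v = n - 2)) := by
    intro u v hu hv huv
    rw [sub_eq_iff_eq_add] at huv
    have h' : (u : ZMod (n - 1)) = ((v + 1 : ℕ) : ZMod (n - 1)) := by
      rw [huv]; push_cast; ring
    have hm := (ZMod.natCast_eq_natCast_iff _ _ _).1 h'
    rcases Nat.lt_or_ge (v + 1) (n - 1) with hlt | hge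
    · left
      have e : u % (n - 1) = (v + 1) % (n - 1) := hm
      rwa [Nat.mod_eq_of_lt hu, Nat.mod_eq_of_lt hlt] at e
    · right
      have hv1 : v + 1 = n - 1 := by omega
      have e : u % (n - 1) = (v + 1) % (n - 1) := hm
      rw [Nat.mod_eq_of_lt hu, hv1, Nat.mod_self] at e
      exact ⟨e, by omega⟩
  refine ⟨?_, ?_⟩
  · intro hc
    exact h1 (cast_inj_of_lt hx hy (Option.some.inj hc))
  · rintro ⟨-, hc | hc | ⟨i, j, hi, hj, hij⟩⟩
    · exact Option.some_ne_none _ hc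
    · exact Option.some_ne_none _ hc
    · obtain rfl : i = ((x : ℕ) : ZMod (n - 1)) := (Option.some.inj hi).symm
      obtain rfl : j = ((y : ℕ) : ZMod (n - 1)) := (Option.some.inj hj).symm
      rcases hij with hd | hd
      · rcases modeq x y hx hy hd with h | h <;> omega
      · rcases modeq y x hy hx hd with h | h <;> omega

private lemma build {n k : ℕ} (hn : 6 ≤ n) (a b : ℕ → ℕ)
    (H1 : ∀ i, i < k → a i < n - 1 ∧ b i < n - 1 ∧
      (a i = b i ∨ goodPair (n - 1) (a i) (b i)))
    (H2 : ∀ i j, i < k → j < k → i ≠ j →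
      a i ≠ a j ∧ a i ≠ b j ∧ b i ≠ a j ∧ b i ≠ b j)
    (H3 : ∀ i j, i < k → j < k → i ≠ j →
      goodPair (n - 1) (a i) (a j) ∨ goodPair (n - 1) (a i) (b j) ∨
      goodPair (n - 1) (b i) (a j) ∨ goodPair (n - 1) (b i) (b j)) :
    IsMinorOf (⊤ : SimpleGraph (Fin k)) (wheelGraph n)ᶜ := by
  haveI : NeZero (n - 1) := ⟨by omega⟩
  refine ⟨fun i => {some ((a i : ZMod (n - 1))), some ((b i : ZMod (n - 1)))}, ?_, ?_, ?_⟩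
  · intro i
    apply pair_connected
    rcases (H1 i i.2).2.2 with h | h
    · left; rw [h]
    · right; exact good_adj hn (H1 i i.2).1 (H1 i i.2).2.1 h
  · intro i j hij
    obtain ⟨d1, d2, d3, d4⟩ := H2 i j i.2 j.2 (fun h => hij (Fin.ext h))
    rw [Set.disjoint_left]
    rintro z (rfl | rfl) hz <;>
      rcases Set.mem_insert_iff.1 hz with hc | hc <;>
      first
        | exact d1 (cast_inj_of_lt (H1 i i.2).1 (H1 j j.2).1 (Option.some.inj hc))
        | exact d2 (cast_inj_of_lt (H1 i i.2).1 (H1 j j.2).2.1 (Option.some.inj hc))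
        | exact d3 (cast_inj_of_lt (H1 i i.2).2.1 (H1 j j.2).1 (Option.some.inj hc))
        | exact d4 (cast_inj_of_lt (H1 i i.2).2.1 (H1 j j.2).2.1 (Option.some.inj hc))
  · intro i j hadj
    have hij : (i : ℕ) ≠ (j : ℕ) := fun h => hadj.ne (Fin.ext h)
    have memA : ∀ l : Fin k, some ((a l : ZMod (n - 1))) ∈
        ({some ((a l : ZMod (n - 1))), some ((b l : ZMod (n - 1)))} : Set (Option (ZMod (n - 1)))) :=
      fun l => Set.mem_insert _ _
    have memB : ∀ l : Fin k, some ((b l : ZMod (n - 1))) ∈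
        ({some ((a l : ZMod (n - 1))), some ((b l : ZMod (n - 1)))} : Set (Option (ZMod (n - 1)))) :=
      fun l => Set.mem_insert_iff.2 (Or.inr rfl)
    rcases H3 i j i.2 j.2 hij with h | h | h | h
    · exact ⟨_, memA i, _, memA j, good_adj hn (H1 i i.2).1 (H1 j j.2).1 h⟩
    · exact ⟨_, memA i, _, memB j, good_adj hn (H1 i i.2).1 (H1 j j.2).2.1 h⟩
    · exact ⟨_, memB i, _, memA j, good_adj hn (H1 i i.2).2.1 (H1 j j.2).1 h⟩
    · exact ⟨_, memB i, _, memB j, good_adj hn (H1 i i.2).2.1 (H1 j j.2).2.1 h⟩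

/-- The complement of the wheel graph `W n` contains a `K ⌊3(n-1)/4⌋` minor, for `n ≥ 6`. -/
theorem wheel_compl_hadwiger_lb (n : ℕ) (hn : 6 ≤ n) :
    IsMinorOf (⊤ : SimpleGraph (Fin (3 * (n - 1) / 4))) (wheelGraph n)ᶜ := by
  rcases eq_or_ne (n - 1) 5 with h5 | h5
  · have hk : 3 * (n - 1) / 4 = 3 := by omega
    refine build hn
      (fun i => if i = 0 then 0 else if i = 1 then 2 else 1)
      (fun i => if i = 0 then 0 else if i = 1 then 4 else 3) ?_ ?_ ?_
    · intro i hi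
      rw [hk] at hi
      interval_cases i <;> simp only [goodPair, h5] <;> norm_num
    · intro i j hi hj hne
      rw [hk] at hi hj
      interval_cases i <;> interval_cases j <;> simp -failIfUnchanged only [h5] <;> norm_num <;> omega
    · intro i j hi hj hne
      rw [hk] at hi hj
      interval_cases i <;> interval_cases j <;> simp only [goodPair, h5] <;> norm_num <;> omega
  rcases eq_or_ne (n - 1) 6 with h6 | h6
  · have hk : 3 * (n - 1) / 4 = 4 := by omega
    refine build hn
      (fun i => if i = 0 then 0 else if i = 1 then 3 else if i = 2 then 1 else 2)
      (fun i => if i = 0 then 0 else if i = 1 then 3 else if i = 2 then 4 else 5) ?_ ?_ ?_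
    · intro i hi
      rw [hk] at hi
      interval_cases i <;> simp only [goodPair, h6] <;> norm_num
    · intro i j hi hj hne
      rw [hk] at hi hj
      interval_cases i <;> interval_cases j <;> simp -failIfUnchanged only [h6] <;> norm_num <;> omega
    · intro i j hi hj hne
      rw [hk] at hi hj
      interval_cases i <;> interval_cases j <;> simp only [goodPair, h6] <;> norm_num <;> omega
  · -- general case : n - 1 ≥ 7
    have h7 : 7 ≤ n - 1 := by omega
    obtain ⟨q, r, hr, hm⟩ : ∃ q r, r < 4 ∧ n - 1 = 4 * q + r :=
      ⟨(n - 1) / 4, (n - 1) % 4, Nat.mod_lt _ (by norm_num), by omega⟩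
    interval_cases r <;>
    · refine build hn
        (fun i => if i < (n - 1) / 2 then 2 * i
          else min (2 * (i - (n - 1) / 2) + 1) (n - 2))
        (fun i => if i < (n - 1) / 2 then 2 * i
          else min (2 * (i - (n - 1) / 2 + (3 * (n - 1) / 4 - (n - 1) / 2)) + 1) (n - 2))
        ?_ ?_ ?_ <;>
      · intros
        simp -failIfUnchanged only [goodPair]
        split_ifs <;> omega
end

section
/- For every integer n ≥ 6, the complement of the wheel graph W_n does not contain the complete graph on ⌊3(n−1)/4⌋ + 1 vertices as a minor. -/
open SimpleGraph

/-- Counting bound: if `k` pairwise disjoint nonempty subsets of `ZMod m` are such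
that between any two there is a pair of vertices that are neither equal nor
consecutive on the cycle, then `4 * k ≤ 3 * m`. -/
lemma cycle_compl_count {m k : ℕ} [NeZero m] [Fact (1 < m)]
    (g : Fin k → Finset (ZMod m))
    (hgne : ∀ a, (g a).Nonempty)
    (hgdisj : ∀ a b, a ≠ b → Disjoint (g a) (g b))
    (key : ∀ a b, a ≠ b → ∃ i ∈ g a, ∃ j ∈ g b, ¬ (i - j = 1 ∨ j - i = 1)) :
    4 * k ≤ 3 * m := by
  classical
  set A := Finset.univ.filter (fun a : Fin k => (g a).card = 1) with hA
  set B := Finset.univ.filter (fun a : Fin k => ¬ (g a).card = 1) with hB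
  have hmemA : ∀ a, a ∈ A → (g a).card = 1 := by
    intro a ha
    rw [hA, Finset.mem_filter] at ha
    exact ha.2
  have hmemB : ∀ a, a ∈ B → 2 ≤ (g a).card := by
    intro a ha
    rw [hB, Finset.mem_filter] at ha
    have h2 : 0 < (g a).card := Finset.card_pos.mpr (hgne a)
    have := ha.2
    omega
  have hAB : A.card + B.card = k := by
    rw [hA, hB, Finset.card_filter_add_card_filter_not]
    simp
  set S1 := A.biUnion g with hS1
  set U := B.biUnion g with hU
  set N := S1.image (· + 1) with hN
  have hS1card : S1.card = A.card := by
    rw [hS1, Finset.card_biUnion (fun x _ y _ hxy => hgdisj x y hxy)]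
    rw [Finset.sum_congr rfl (fun a ha => hmemA a ha)]
    simp
  have hUcard : 2 * B.card ≤ U.card := by
    rw [hU, Finset.card_biUnion (fun x _ y _ hxy => hgdisj x y hxy)]
    calc 2 * B.card = ∑ _a ∈ B, 2 := by rw [Finset.sum_const, smul_eq_mul, mul_comm]
      _ ≤ ∑ a ∈ B, (g a).card := Finset.sum_le_sum (fun a ha => hmemB a ha)
  have hNcard : N.card = S1.card := by
    rw [hN]
    exact Finset.card_image_of_injective _ (add_left_injective 1)
  have hone : (1 : ZMod m) ≠ 0 := one_ne_zero
  have hsingle : ∀ a, a ∈ A → ∀ x, x ∈ g a → g a = {x} := by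
    intro a ha x hx
    obtain ⟨y, hy⟩ := Finset.card_eq_one.mp (hmemA a ha)
    rw [hy] at hx ⊢
    rw [Finset.mem_singleton] at hx
    rw [hx]
  have hS1N : Disjoint S1 N := by
    rw [Finset.disjoint_left]
    intro x hxS hxN
    rw [hN, Finset.mem_image] at hxN
    obtain ⟨i, hiS, hix⟩ := hxN
    subst hix
    rw [hS1, Finset.mem_biUnion] at hxS hiS
    obtain ⟨a, haA, hxa⟩ := hxS
    obtain ⟨a', ha'A, hia'⟩ := hiS
    have hga : g a = {i + 1} := hsingle a haA _ hxa
    have hga' : g a' = {i} := hsingle a' ha'A _ hia'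
    by_cases hd : a = a'
    · subst hd
      rw [hga] at hga'
      have heq : i + 1 = i := Finset.singleton_injective hga'
      exact hone (by rwa [add_eq_left] at heq)
    · obtain ⟨i0, hi0, j0, hj0, hc⟩ := key a a' hd
      rw [hga, Finset.mem_singleton] at hi0
      rw [hga', Finset.mem_singleton] at hj0
      exact hc (Or.inl (by rw [hi0, hj0]; exact add_sub_cancel_left i 1))
  have hS1U : Disjoint S1 U := by
    rw [Finset.disjoint_left]
    intro x hxS hxU
    rw [hS1, Finset.mem_biUnion] at hxS
    rw [hU, Finset.mem_biUnion] at hxU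
    obtain ⟨a, haA, hxa⟩ := hxS
    obtain ⟨b, hbB, hxb⟩ := hxU
    have hab : a ≠ b := by
      intro h
      subst h
      have := hmemA a haA
      have := hmemB a hbB
      omega
    exact Finset.disjoint_left.mp (hgdisj a b hab) hxa hxb
  have hcard_univ : (Finset.univ : Finset (ZMod m)).card = m := by
    rw [Finset.card_univ, ZMod.card]
  have h1 : (S1 ∪ (N ∪ U)).card ≤ m :=
    le_trans (Finset.card_le_card (Finset.subset_univ _)) (le_of_eq hcard_univ)
  have h2 : (S1 ∪ (N ∪ U)).card = S1.card + (N ∪ U).card :=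
    Finset.card_union_of_disjoint (Finset.disjoint_union_right.mpr ⟨hS1N, hS1U⟩)
  have h3 : N.card ≤ (N ∪ U).card := Finset.card_le_card Finset.subset_union_left
  have h4 : U.card ≤ (N ∪ U).card := Finset.card_le_card Finset.subset_union_right
  omega

/-- For `n ≥ 6`, the complement of the wheel graph `W n` has no `K (⌊3(n-1)/4⌋ + 1)` minor. -/
theorem wheel_compl_no_large_clique_minor (n : ℕ) (hn : 6 ≤ n) :
    ¬ IsMinorOf (⊤ : SimpleGraph (Fin (3 * (n - 1) / 4 + 1))) (wheelGraph n)ᶜ := by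
  classical
  haveI : NeZero (n - 1) := ⟨by omega⟩
  haveI : Fact (1 < n - 1) := ⟨by omega⟩
  rintro ⟨f, hconn, hdisj, hadj⟩
  -- the hub `none` is isolated in the complement of the wheel
  have hiso : ∀ x, ¬ (wheelGraph n)ᶜ.Adj none x := by
    intro x h
    rw [compl_adj] at h
    exact h.2 (And.intro h.1 (Or.inl rfl))
  have hksize : 1 < Fintype.card (Fin (3 * (n - 1) / 4 + 1)) := by
    simp only [Fintype.card_fin]
    omega
  -- every branch set contains a rim vertex
  have hsome : ∀ a, ∃ i, some i ∈ f a := by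
    intro a
    obtain ⟨b, hb⟩ := Fintype.exists_ne_of_one_lt_card hksize a
    obtain ⟨u, hu, v, hv, huv⟩ := hadj a b (by simpa using hb.symm)
    cases u with
    | none => exact absurd huv (hiso v)
    | some i => exact ⟨i, hu⟩
  -- no branch set contains the hub
  have hnone : ∀ a, none ∉ f a := by
    intro a ha
    obtain ⟨i, hi⟩ := hsome a
    obtain ⟨w⟩ := (hconn a).preconnected ⟨none, ha⟩ ⟨some i, hi⟩
    cases w with
    | cons h p => exact hiso _ h
  -- rim branch sets
  set g : Fin (3 * (n - 1) / 4 + 1) → Finset (ZMod (n - 1)) :=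
    fun a => (Set.toFinite {i | some i ∈ f a}).toFinset with hgdef
  have hmem : ∀ a i, i ∈ g a ↔ some i ∈ f a := by
    intro a i
    rw [hgdef]
    simp [Set.Finite.mem_toFinset]
  have hgne : ∀ a, (g a).Nonempty := by
    intro a
    obtain ⟨i, hi⟩ := hsome a
    exact ⟨i, (hmem a i).2 hi⟩
  have hgdisj : ∀ a b, a ≠ b → Disjoint (g a) (g b) := by
    intro a b hab
    rw [Finset.disjoint_left]
    intro i hia hib
    exact Set.disjoint_left.mp (hdisj a b hab) ((hmem a i).1 hia) ((hmem b i).1 hib)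
  have key : ∀ a b, a ≠ b → ∃ i ∈ g a, ∃ j ∈ g b, ¬ (i - j = 1 ∨ j - i = 1) := by
    intro a b hab
    obtain ⟨u, hu, v, hv, huv⟩ := hadj a b (by simpa using hab)
    cases u with
    | none => exact absurd hu (hnone a)
    | some i =>
      cases v with
      | none => exact absurd hv (hnone b)
      | some j =>
        rw [compl_adj] at huv
        refine ⟨i, (hmem a i).2 hu, j, (hmem b j).2 hv, ?_⟩
        intro hc
        exact huv.2 (And.intro huv.1 (Or.inr (Or.inr ⟨i, j, rfl, rfl, hc⟩)))
  have hbound := cycle_compl_count g hgne hgdisj key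
  omega
end

section
/- Let G be a maximal outerplanar graph on n ≥ 7 vertices with outer cycle v_1,…,v_n. Then exactly one of the following holds: (1) G has two vertex-disjoint chords e_1, e_2 each of which is a 2-chord (i.e., joins two vertices at distance 2 along the outer cycle); or (2) G is isomorphic to the join K_1 + P_{n−1} of a vertex with a path on n−1 vertices (a fan graph). -/
open SimpleGraph

/-- A maximal outerplanar graph on `Fin n`, with vertices in cyclic order:
it contains the outer cycle `i ~ i+1 (mod n)`, its chords are pairwise
non-crossing, and it is edge-maximal with that property (equivalently, it is a
triangulation of the `n`-gon).  An existing edge `{e,f}` crosses the pair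
`{a,b}` (with `a < b`) iff exactly one of its endpoints lies strictly between
`a` and `b`. -/
def IsMaxOuterplanar {n : ℕ} (G : SimpleGraph (Fin n)) : Prop :=
  (∀ i j : Fin n, (j : ℕ) = ((i : ℕ) + 1) % n → G.Adj i j) ∧
  (∀ a b e f : Fin n, G.Adj a b → G.Adj e f →
    ¬(a < e ∧ e < b ∧ (f < a ∨ b < f))) ∧
  (∀ a b : Fin n, a < b → ¬G.Adj a b →
    ∃ e f : Fin n, G.Adj e f ∧ a < e ∧ e < b ∧ (f < a ∨ b < f))

/-- The join `G + H` of two graphs. -/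
def joinGraph {α β : Type*} (G : SimpleGraph α) (H : SimpleGraph β) :
    SimpleGraph (α ⊕ β) where
  Adj x y := match x, y with
    | Sum.inl a, Sum.inl b => G.Adj a b
    | Sum.inr a, Sum.inr b => H.Adj a b
    | _, _ => True
  symm := by
    refine ⟨?_⟩
    rintro (a | a) (b | b) h
    · exact G.adj_symm h
    · trivial
    · trivial
    · exact H.adj_symm h
  loopless := by
    refine ⟨?_⟩
    rintro (a | a) h
    · exact G.loopless.irrefl a h
    · exact H.loopless.irrefl a h

namespace MOPAux

variable {n : ℕ}

lemma mod_small {y : ℕ} (h0 : 0 < n) (h : y < 2 * n) :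
    y % n = if y < n then y else y - n := by
  split_ifs with h1
  · exact Nat.mod_eq_of_lt h1
  · rw [Nat.mod_eq_sub_mod (by omega), Nat.mod_eq_of_lt (by omega)]

/-- cyclic distance from `a` forwards to `x`. -/
def arcd (a x : Fin n) : ℕ := if a.val ≤ x.val then x.val - a.val else x.val + n - a.val

lemma arcd_lt (a x : Fin n) : arcd a x < n := by
  have := a.isLt; have := x.isLt; unfold arcd; split_ifs <;> omega

lemma arcd_self (a : Fin n) : arcd a a = 0 := by unfold arcd; simp

lemma arcd_eq_zero_iff {a x : Fin n} : arcd a x = 0 ↔ a = x := by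
  have := a.isLt; have := x.isLt
  rw [Fin.ext_iff]; unfold arcd; split_ifs <;> omega

lemma arcd_inj {a x y : Fin n} (h : arcd a x = arcd a y) : x = y := by
  have := a.isLt; have := x.isLt; have := y.isLt
  apply Fin.ext; revert h; unfold arcd; split_ifs <;> omega

lemma arcd_rebase (k u v : Fin n) :
    (arcd k u ≤ arcd k v ∧ arcd u v = arcd k v - arcd k u) ∨
    (arcd k v < arcd k u ∧ arcd u v = arcd k v + n - arcd k u) := by
  have := k.isLt; have := u.isLt; have := v.isLt
  unfold arcd; split_ifs <;> omega

lemma arcd_comp {a b : Fin n} (h : a ≠ b) : arcd a b + arcd b a = n := by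
  have := a.isLt; have := b.isLt
  have hv : a.val ≠ b.val := by simpa [Fin.ext_iff] using h
  unfold arcd; split_ifs <;> omega

section NeZero
variable [NeZero n]

lemma val_two (hn : 7 ≤ n) : ((2 : Fin n) : ℕ) = 2 := by
  show 2 % n = 2; exact Nat.mod_eq_of_lt (by omega)

lemma val_one (hn : 7 ≤ n) : ((1 : Fin n) : ℕ) = 1 := by
  show 1 % n = 1; exact Nat.mod_eq_of_lt (by omega)

lemma val_zero' : ((0 : Fin n) : ℕ) = 0 := by
  show 0 % n = 0; exact Nat.zero_mod n

lemma val_add_one (hn : 7 ≤ n) (x : Fin n) :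
    ((x + 1 : Fin n) : ℕ) = if x.val + 1 < n then x.val + 1 else x.val + 1 - n := by
  show (x.val + ((1 : Fin n)).val) % n = _
  rw [val_one hn]
  exact mod_small (by omega) (by have := x.isLt; omega)

lemma val_add_two (hn : 7 ≤ n) (x : Fin n) :
    ((x + 2 : Fin n) : ℕ) = if x.val + 2 < n then x.val + 2 else x.val + 2 - n := by
  show (x.val + ((2 : Fin n)).val) % n = _
  rw [val_two hn]
  exact mod_small (by omega) (by have := x.isLt; omega)

lemma val_add_two_mod (hn : 7 ≤ n) (x : Fin n) :
    ((x + 2 : Fin n) : ℕ) = (x.val + 2) % n := by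
  show (x.val + ((2 : Fin n)).val) % n = _
  rw [val_two hn]

lemma arcd_succ (hn : 7 ≤ n) (x : Fin n) : arcd x (x + 1) = 1 := by
  have := x.isLt; have h := val_add_one hn x
  unfold arcd; split_ifs at h ⊢ <;> omega

lemma arcd_two (hn : 7 ≤ n) (x : Fin n) : arcd x (x + 2) = 2 := by
  have := x.isLt; have h := val_add_two hn x
  unfold arcd; split_ifs at h ⊢ <;> omega

lemma arcd_add_one (hn : 7 ≤ n) {a x : Fin n} (h : arcd a x + 1 < n) :
    arcd a (x + 1) = arcd a x + 1 := by
  have := a.isLt; have := x.isLt; have hv := val_add_one hn x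
  unfold arcd at *; split_ifs at * <;> omega

lemma arcd_add_two (hn : 7 ≤ n) {a x : Fin n} (h : arcd a x + 2 < n) :
    arcd a (x + 2) = arcd a x + 2 := by
  have := a.isLt; have := x.isLt; have hv := val_add_two hn x
  unfold arcd at *; split_ifs at * <;> omega

lemma add_arcd (k v : Fin n) : k + (⟨arcd k v, arcd_lt k v⟩ : Fin n) = v := by
  have := k.isLt; have := v.isLt
  apply Fin.ext
  show (k.val + arcd k v) % n = v.val
  rw [mod_small (by omega) (by have := arcd_lt k v; omega)]
  unfold arcd; split_ifs <;> omega

lemma arcd_self_add (k t : Fin n) : arcd k (k + t) = t.val := by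
  have := k.isLt; have := t.isLt
  have hv : ((k + t : Fin n)).val = (k.val + t.val) % n := rfl
  rw [mod_small (by omega) (by omega)] at hv
  unfold arcd; split_ifs at hv ⊢ <;> omega

end NeZero
end MOPAux

namespace MOPAux
variable {n : ℕ} {G : SimpleGraph (Fin n)}

def InArc (a b x : Fin n) : Prop := 0 < arcd a x ∧ arcd a x < arcd a b

def Cross (a b e f : Fin n) : Prop :=
  (InArc a b e ∧ InArc b a f) ∨ (InArc a b f ∧ InArc b a e)

lemma inArc_iff_lt {a b x : Fin n} (hab : a.val < b.val) :
    InArc a b x ↔ (a.val < x.val ∧ x.val < b.val) := by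
  have := a.isLt; have := b.isLt; have := x.isLt
  simp only [InArc, arcd]; split_ifs <;> omega

lemma inArc_iff_gt {a b x : Fin n} (hab : b.val < a.val) :
    InArc a b x ↔ (x.val < b.val ∨ a.val < x.val) := by
  have := a.isLt; have := b.isLt; have := x.isLt
  simp only [InArc, arcd]; split_ifs <;> omega

lemma no_cross (hG : IsMaxOuterplanar G) {a b e f : Fin n}
    (hab : G.Adj a b) (hef : G.Adj e f) : ¬ Cross a b e f := by
  obtain ⟨-, hcross, -⟩ := hG
  intro hc
  rcases lt_trichotomy a.val b.val with hv | hv | hv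
  · rcases hc with ⟨h1, h2⟩ | ⟨h1, h2⟩
    · rw [inArc_iff_lt hv] at h1; rw [inArc_iff_gt hv] at h2
      exact hcross a b e f hab hef ⟨Fin.lt_def.2 h1.1, Fin.lt_def.2 h1.2,
        h2.imp Fin.lt_def.2 Fin.lt_def.2⟩
    · rw [inArc_iff_lt hv] at h1; rw [inArc_iff_gt hv] at h2
      exact hcross a b f e hab hef.symm ⟨Fin.lt_def.2 h1.1, Fin.lt_def.2 h1.2,
        h2.imp Fin.lt_def.2 Fin.lt_def.2⟩
  · have : a = b := Fin.ext hv
    subst this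
    rcases hc with ⟨h1, -⟩ | ⟨h1, -⟩ <;>
    · obtain ⟨h2, h3⟩ := h1
      simp [arcd_self] at h3
  · rcases hc with ⟨h1, h2⟩ | ⟨h1, h2⟩
    · rw [inArc_iff_gt hv] at h1; rw [inArc_iff_lt hv] at h2
      exact hcross b a f e hab.symm hef.symm ⟨Fin.lt_def.2 h2.1, Fin.lt_def.2 h2.2,
        h1.imp Fin.lt_def.2 Fin.lt_def.2⟩
    · rw [inArc_iff_gt hv] at h1; rw [inArc_iff_lt hv] at h2
      exact hcross b a e f hab.symm hef ⟨Fin.lt_def.2 h2.1, Fin.lt_def.2 h2.2,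
        h1.imp Fin.lt_def.2 Fin.lt_def.2⟩

lemma exists_cross (hG : IsMaxOuterplanar G) {a b : Fin n}
    (hne : a ≠ b) (hnadj : ¬ G.Adj a b) :
    ∃ e f, G.Adj e f ∧ InArc a b e ∧ InArc b a f := by
  obtain ⟨-, -, hmax⟩ := hG
  have hv : a.val ≠ b.val := by simpa [Fin.ext_iff] using hne
  rcases lt_or_gt_of_ne hv with hv | hv
  · obtain ⟨e, f, hef, h1, h2, h3⟩ := hmax a b (Fin.lt_def.2 hv) hnadj
    exact ⟨e, f, hef, (inArc_iff_lt hv).2 ⟨Fin.lt_def.1 h1, Fin.lt_def.1 h2⟩,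
      (inArc_iff_gt hv).2 (h3.imp Fin.lt_def.1 Fin.lt_def.1)⟩
  · obtain ⟨e, f, hef, h1, h2, h3⟩ := hmax b a (Fin.lt_def.2 hv)
      (fun h => hnadj h.symm)
    exact ⟨f, e, hef.symm, (inArc_iff_gt hv).2 (by
        rcases h3 with h3 | h3
        · exact Or.inl (Fin.lt_def.1 h3)
        · exact Or.inr (Fin.lt_def.1 h3)),
      (inArc_iff_lt hv).2 ⟨Fin.lt_def.1 h1, Fin.lt_def.1 h2⟩⟩

variable [NeZero n]

lemma adj_succ (hn : 7 ≤ n) (hG : IsMaxOuterplanar G) (a : Fin n) : G.Adj a (a + 1) := by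
  refine hG.1 a (a + 1) ?_
  rw [val_add_one hn]
  have := a.isLt
  rw [mod_small (n := n) (by omega) (by omega)]

lemma triangle (hn : 7 ≤ n) (hG : IsMaxOuterplanar G) {α β : Fin n}
    (hadj : G.Adj α β) (h2 : 2 ≤ arcd α β) :
    ∃ m, (0 < arcd α m ∧ arcd α m < arcd α β) ∧ G.Adj α m ∧ G.Adj m β := by
  classical
  set S : Finset (Fin n) :=
    Finset.univ.filter (fun m => (0 < arcd α m ∧ arcd α m < arcd α β) ∧ G.Adj α m) with hS
  have hne : S.Nonempty := by
    refine ⟨α + 1, ?_⟩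
    simp only [hS, Finset.mem_filter, Finset.mem_univ, true_and]
    exact ⟨⟨by rw [arcd_succ hn]; omega, by rw [arcd_succ hn]; omega⟩, adj_succ hn hG α⟩
  obtain ⟨m, hmS, hmax'⟩ := Finset.exists_max_image S (arcd α) hne
  simp only [hS, Finset.mem_filter, Finset.mem_univ, true_and] at hmS
  obtain ⟨⟨hm0, hmβ⟩, hαm⟩ := hmS
  refine ⟨m, ⟨hm0, hmβ⟩, hαm, ?_⟩
  by_contra hnadj
  have hmβne : m ≠ β := by
    intro h; subst h; omega
  obtain ⟨e, f, hef, hIe, hIf⟩ := exists_cross hG hmβne hnadj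
  obtain ⟨hIe1, hIe2⟩ := hIe
  obtain ⟨hIf1, hIf2⟩ := hIf
  have rme := arcd_rebase α m e
  have rmβ := arcd_rebase α m β
  have rβf := arcd_rebase α β f
  have rβm := arcd_rebase α β m
  have lte := arcd_lt α e
  have ltf := arcd_lt α f
  have ltm := arcd_lt α m
  have ltβ := arcd_lt α β
  -- De ∈ (Dm, Dβ)
  have hDe : arcd α m < arcd α e ∧ arcd α e < arcd α β := by omega
  -- Df > Dβ or Df < Dm
  have hDf : arcd α β < arcd α f ∨ arcd α f < arcd α m := by
    rcases rβf with ⟨h1, h2⟩ | ⟨h1, h2⟩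
    · left
      rcases eq_or_lt_of_le h1 with h1' | h1'
      · exfalso
        have hfb : β = f := arcd_inj h1'
        rw [← hfb, arcd_self] at hIf1
        omega
      · exact h1'
    · right; omega
  rcases hDf with hDf | hDf
  · -- {e,f} crosses {α,β}
    have rβα := arcd_rebase α β α
    rw [arcd_self] at rβα
    refine no_cross hG hadj hef (Or.inl ⟨⟨by omega, by omega⟩, ⟨?_, ?_⟩⟩) <;> omega
  · rcases Nat.eq_zero_or_pos (arcd α f) with hf0 | hf0
    · -- f = α : contradicts maximality of m
      have : α = f := arcd_eq_zero_iff.1 hf0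
      subst this
      have : e ∈ S := by
        simp only [hS, Finset.mem_filter, Finset.mem_univ, true_and]
        exact ⟨⟨by omega, by omega⟩, hef.symm⟩
      have := hmax' e this
      omega
    · -- {f,e} crosses {α,m}
      have rmα := arcd_rebase α m α
      rw [arcd_self] at rmα
      refine no_cross hG hαm hef (Or.inr ⟨⟨by omega, by omega⟩, ⟨?_, ?_⟩⟩) <;> omega

lemma ear (hn : 7 ≤ n) (hG : IsMaxOuterplanar G) :
    ∀ L, ∀ α β : Fin n, arcd α β = L → 2 ≤ L → G.Adj α β →
    ∃ c : Fin n, G.Adj c (c + 2) ∧ arcd α c + 2 ≤ arcd α β := by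
  intro L
  induction L using Nat.strong_induction_on with
  | _ L IH =>
    intro α β hL h2 hadj
    rcases eq_or_lt_of_le h2 with h2' | h3
    · have hβ : β = α + 2 := arcd_inj (by rw [hL, ← h2', arcd_two hn])
      exact ⟨α, hβ ▸ hadj, by rw [arcd_self]; omega⟩
    · obtain ⟨m, ⟨hm0, hmb⟩, h1, h2'⟩ := triangle hn hG hadj (by omega)
      by_cases hcase : 2 ≤ arcd α m
      · obtain ⟨c, hc, hcb⟩ := IH (arcd α m) (by omega) α m rfl hcase h1
        exact ⟨c, hc, by omega⟩
      · have hDm : arcd α m = 1 := by omega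
        have rmβ := arcd_rebase α m β
        have hmb2 : 2 ≤ arcd m β := by omega
        have hlt : arcd m β < L := by omega
        obtain ⟨c, hc, hcb⟩ := IH (arcd m β) hlt m β rfl hmb2 h2'
        refine ⟨c, hc, ?_⟩
        have rmc := arcd_rebase α m c
        have := arcd_lt α c
        have := arcd_lt α β
        omega

end MOPAux

namespace MOPAux
variable {n : ℕ} {G : SimpleGraph (Fin n)}

def HasDisjointPair (G : SimpleGraph (Fin n)) : Prop :=
  ∃ a b c d : Fin n, (b : ℕ) = ((a : ℕ) + 2) % n ∧ (d : ℕ) = ((c : ℕ) + 2) % n ∧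
    G.Adj a b ∧ G.Adj c d ∧ a ≠ c ∧ a ≠ d ∧ b ≠ c ∧ b ≠ d

variable [NeZero n]

lemma apex_all (hn : 7 ≤ n) (hG : IsMaxOuterplanar G) (hnp : ¬ HasDisjointPair G)
    {y : Fin n} (e1 : G.Adj y (y + 2)) (e2 : G.Adj (y + 2) (y + 2 + 2)) :
    ∀ j, j ≠ y + 2 → G.Adj (y + 2) j := by
  intro j hj
  by_contra hnadj
  set k := y + 2 with hk
  obtain ⟨e, f, hef, hIe, hIf⟩ := exists_cross hG (Ne.symm hj) hnadj
  obtain ⟨hIe1, hIe2⟩ := hIe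
  obtain ⟨hIf1, hIf2⟩ := hIf
  have rjf := arcd_rebase k j f
  have rjk := arcd_rebase k j k
  rw [arcd_self] at rjk
  have lte := arcd_lt k e
  have ltf := arcd_lt k f
  have ltj := arcd_lt k j
  have hDf : arcd k j < arcd k f := by
    rcases rjf with ⟨h1, h2⟩ | ⟨h1, h2⟩
    · rcases eq_or_lt_of_le h1 with h1' | h1'
      · exfalso
        have : j = f := arcd_inj h1'
        rw [← this, arcd_self] at hIf1; omega
      · exact h1'
    · omega
  have hef2 : 2 ≤ arcd e f := by
    have := arcd_rebase k e f
    omega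
  obtain ⟨c, hc, hcb⟩ := ear hn hG (arcd e f) e f rfl hef2 hef
  have rec' := arcd_rebase k e c
  have ref := arcd_rebase k e f
  have ltc := arcd_lt k c
  have hPc : arcd k e ≤ arcd k c ∧ arcd k c + 2 ≤ arcd k f := by omega
  have hyk : y ≠ k := by
    have := arcd_two hn y
    intro h; rw [← hk, ← h, arcd_self] at this; omega
  have hy : arcd k y = n - 2 := by
    have h1 := arcd_comp hyk
    have h2 := arcd_two hn y
    rw [← hk] at h2
    omega
  have hk2 : arcd k (k + 2) = 2 := arcd_two hn k
  have hc2 : arcd k (c + 2) = arcd k c + 2 := arcd_add_two hn (by omega)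
  have hsh1 : y = c ∨ y = c + 2 ∨ k = c ∨ k = c + 2 := by
    by_contra h
    push_neg at h
    exact hnp ⟨y, y + 2, c, c + 2, val_add_two_mod hn y, val_add_two_mod hn c,
      e1, hc, h.1, h.2.1, h.2.2.1, h.2.2.2⟩
  have hsh2 : k = c ∨ k = c + 2 ∨ k + 2 = c ∨ k + 2 = c + 2 := by
    by_contra h
    push_neg at h
    exact hnp ⟨k, k + 2, c, c + 2, val_add_two_mod hn k, val_add_two_mod hn c,
      e2, hc, h.1, h.2.1, h.2.2.1, h.2.2.2⟩
  have hv1 : n - 2 = arcd k c ∨ n - 2 = arcd k c + 2 ∨ 0 = arcd k c ∨ 0 = arcd k c + 2 := by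
    rcases hsh1 with h | h | h | h
    · left; have h' := congrArg (arcd k) h; rwa [hy] at h'
    · right; left; have h' := congrArg (arcd k) h; rwa [hy, hc2] at h'
    · right; right; left; have h' := congrArg (arcd k) h; rwa [arcd_self] at h'
    · right; right; right; have h' := congrArg (arcd k) h; rwa [arcd_self, hc2] at h'
  have hv2 : 0 = arcd k c ∨ 0 = arcd k c + 2 ∨ 2 = arcd k c ∨ 2 = arcd k c + 2 := by
    rcases hsh2 with h | h | h | h
    · left; have h' := congrArg (arcd k) h; rwa [arcd_self] at h'
    · right; left; have h' := congrArg (arcd k) h; rwa [arcd_self, hc2] at h'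
    · right; right; left; have h' := congrArg (arcd k) h; rwa [hk2] at h'
    · right; right; right; have h' := congrArg (arcd k) h; rwa [hk2, hc2] at h'
  omega

end MOPAux

namespace MOPAux
variable {n : ℕ} {G : SimpleGraph (Fin n)} [NeZero n]

lemma ne_of_arcd_pos {a x : Fin n} (h : 0 < arcd a x) : x ≠ a := by
  intro he; subst he; rw [arcd_self] at h; omega

/-- In a fan with apex `k`, the non-apex adjacencies are exactly consecutive ones. -/
lemma adj_iff (hn : 7 ≤ n) (hG : IsMaxOuterplanar G) {k : Fin n}
    (hk : ∀ j, j ≠ k → G.Adj k j) {u v : Fin n} (hu : u ≠ k) (hv : v ≠ k) :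
    G.Adj u v ↔ (arcd k v = arcd k u + 1 ∨ arcd k u = arcd k v + 1) := by
  have hpu : 0 < arcd k u := by
    rcases Nat.eq_zero_or_pos (arcd k u) with h | h
    · exact absurd (arcd_eq_zero_iff.1 h).symm hu
    · exact h
  have hpv : 0 < arcd k v := by
    rcases Nat.eq_zero_or_pos (arcd k v) with h | h
    · exact absurd (arcd_eq_zero_iff.1 h).symm hv
    · exact h
  have ltu := arcd_lt k u
  have ltv := arcd_lt k v
  have key : ∀ u' v' : Fin n, u' ≠ k → v' ≠ k → G.Adj u' v' →
      arcd k u' < arcd k v' → arcd k v' = arcd k u' + 1 := by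
    intro u' v' hu' hv' hadj hlt
    by_contra hne
    have ltu' := arcd_lt k u'
    have ltv' := arcd_lt k v'
    have hpu' : 0 < arcd k u' := by
      rcases Nat.eq_zero_or_pos (arcd k u') with h | h
      · exact absurd (arcd_eq_zero_iff.1 h).symm hu'
      · exact h
    set w := u' + 1 with hw
    have hpw : arcd k w = arcd k u' + 1 := arcd_add_one hn (by omega)
    have hwk : w ≠ k := ne_of_arcd_pos (by omega)
    have hkw : G.Adj k w := hk w hwk
    have ruv := arcd_rebase k u' v'
    have ruw := arcd_rebase k u' w
    have rvk := arcd_rebase k v' k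
    rw [arcd_self] at rvk
    have rvu := arcd_rebase k v' u'
    exact no_cross hG hadj hkw (Or.inr ⟨⟨by omega, by omega⟩, ⟨by omega, by omega⟩⟩)
  constructor
  · intro hadj
    have hne : arcd k u ≠ arcd k v := fun h => hadj.ne (arcd_inj h)
    rcases lt_or_gt_of_ne hne with h | h
    · exact Or.inl (key u v hu hv hadj h)
    · exact Or.inr (key v u hv hu hadj.symm h)
  · intro h
    rcases h with h | h
    · have : v = u + 1 := arcd_inj (a := k) (by rw [arcd_add_one hn (by omega), h])
      subst this
      exact adj_succ hn hG u
    · have : u = v + 1 := arcd_inj (a := k) (by rw [arcd_add_one hn (by omega), h])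
      subst this
      exact (adj_succ hn hG v).symm

/-- every 2-edge passes through the apex of a fan. -/
lemma twoedge_mem (hn : 7 ≤ n) (hG : IsMaxOuterplanar G) {k : Fin n}
    (hk : ∀ j, j ≠ k → G.Adj k j) {u : Fin n} (h : G.Adj u (u + 2)) :
    k = u ∨ k = u + 2 := by
  by_contra hcon
  push_neg at hcon
  obtain ⟨h1, h2⟩ := hcon
  have h12 : arcd k (u + 2) = arcd k u + 1 ∨ arcd k u = arcd k (u + 2) + 1 :=
    (adj_iff hn hG hk (Ne.symm h1) (Ne.symm h2)).1 h
  have hpu : 0 < arcd k u := by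
    rcases Nat.eq_zero_or_pos (arcd k u) with hz | hz
    · exact absurd (arcd_eq_zero_iff.1 hz).symm (Ne.symm h1)
    · exact hz
  have hpv : 0 < arcd k (u + 2) := by
    rcases Nat.eq_zero_or_pos (arcd k (u + 2)) with hz | hz
    · exact absurd (arcd_eq_zero_iff.1 hz).symm (Ne.symm h2)
    · exact hz
  have ltu := arcd_lt k u
  have ltv := arcd_lt k (u + 2)
  -- relate arcd k (u+2) to arcd k u : it is (arcd k u + 2) mod n
  have ruu2 := arcd_rebase k u (u + 2)
  have h2' : arcd u (u + 2) = 2 := arcd_two hn u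
  omega

end MOPAux

namespace MOPAux
variable {n : ℕ} {G : SimpleGraph (Fin n)} [NeZero n]

lemma arcd_pos {k v : Fin n} (hv : v ≠ k) : 0 < arcd k v := by
  rcases Nat.eq_zero_or_pos (arcd k v) with h | h
  · exact absurd (arcd_eq_zero_iff.1 h).symm hv
  · exact h

lemma fan_iso (hn : 7 ≤ n) (hG : IsMaxOuterplanar G) {k : Fin n}
    (hk : ∀ j, j ≠ k → G.Adj k j) :
    Nonempty (G ≃g joinGraph (⊥ : SimpleGraph Unit) (pathGraph (n - 1))) := by
  have hb : ∀ v : Fin n, v ≠ k → arcd k v - 1 < n - 1 := fun v hv => by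
    have := arcd_lt k v; have := arcd_pos hv; omega
  refine ⟨⟨⟨fun v => if h : v = k then Sum.inl () else Sum.inr ⟨arcd k v - 1, hb v h⟩,
    fun x => Sum.elim (fun _ => k)
      (fun i => k + (⟨i.val + 1, by have := i.isLt; omega⟩ : Fin n)) x, ?_, ?_⟩, ?_⟩⟩
  · -- left inverse
    intro v
    by_cases h : v = k
    · simp [h]
    · simp only [dif_neg h, Sum.elim_inr]
      have h1 := arcd_pos h
      have h2 : (⟨arcd k v - 1 + 1, by have := arcd_lt k v; omega⟩ : Fin n)
          = ⟨arcd k v, arcd_lt k v⟩ := Fin.ext (by simp; omega)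
      rw [h2, add_arcd]
  · -- right inverse
    rintro (⟨⟩ | i)
    · simp
    · simp only [Sum.elim_inr]
      have ha : arcd k (k + (⟨i.val + 1, by have := i.isLt; omega⟩ : Fin n)) = i.val + 1 :=
        arcd_self_add k _
      have hne : k + (⟨i.val + 1, by have := i.isLt; omega⟩ : Fin n) ≠ k :=
        ne_of_arcd_pos (by rw [ha]; omega)
      refine (dif_neg hne).trans ?_
      congr 1
      apply Fin.ext
      simp [ha]
  · -- map_rel_iff
    intro u v
    simp only [Equiv.coe_fn_mk]
    by_cases hu : u = k <;> by_cases hv : v = k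
    · subst hu; subst hv
      rw [dif_pos rfl]
      constructor
      · exact fun h => absurd h (fun h' => h'.elim)
      · exact fun h => absurd h (G.irrefl)
    · subst hu
      rw [dif_pos rfl, dif_neg hv]
      constructor
      · exact fun _ => hk v hv
      · exact fun _ => trivial
    · subst hv
      rw [dif_pos rfl, dif_neg hu]
      constructor
      · exact fun _ => (hk u hu).symm
      · exact fun _ => trivial
    · rw [dif_neg hu, dif_neg hv]
      have hLHS : (joinGraph (⊥ : SimpleGraph Unit) (pathGraph (n - 1))).Adj
          (Sum.inr ⟨arcd k u - 1, hb u hu⟩) (Sum.inr ⟨arcd k v - 1, hb v hv⟩) ↔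
          (pathGraph (n - 1)).Adj ⟨arcd k u - 1, hb u hu⟩ ⟨arcd k v - 1, hb v hv⟩ :=
        Iff.rfl
      rw [hLHS, pathGraph_adj, adj_iff hn hG hk hu hv]
      have h1 := arcd_pos hu
      have h2 := arcd_pos hv
      simp only []
      constructor
      · intro h; rcases h with h | h
        · left; omega
        · right; omega
      · intro h; rcases h with h | h
        · left; omega
        · right; omega

lemma iso_apex (iso : G ≃g joinGraph (⊥ : SimpleGraph Unit) (pathGraph (n - 1))) :
    ∃ k : Fin n, ∀ j, j ≠ k → G.Adj k j := by
  refine ⟨iso.symm (Sum.inl ()), fun j hj => ?_⟩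
  have h1 : iso (iso.symm (Sum.inl ())) = Sum.inl () := iso.apply_symm_apply _
  have h2 : iso j ≠ Sum.inl () := by
    intro h
    apply hj
    rw [← iso.symm_apply_apply j, h]
  rw [← iso.map_rel_iff, h1]
  rcases hx : iso j with x | x
  · exact absurd (hx.trans (congrArg Sum.inl (Subsingleton.elim x ()))) h2
  · trivial

end MOPAux


open MOPAux in
/-- A maximal outerplanar graph of order `n ≥ 7` either has two vertex-disjoint
2-chords, or is isomorphic to the fan `K 1 + P (n-1)`, and not both. -/
theorem maxOuterplanar_dichotomy (n : ℕ) (hn : 7 ≤ n) (G : SimpleGraph (Fin n))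
    (hG : IsMaxOuterplanar G) :
    Xor'
      (∃ a b c d : Fin n, (b : ℕ) = ((a : ℕ) + 2) % n ∧ (d : ℕ) = ((c : ℕ) + 2) % n ∧
        G.Adj a b ∧ G.Adj c d ∧ a ≠ c ∧ a ≠ d ∧ b ≠ c ∧ b ≠ d)
      (Nonempty (G ≃g joinGraph (⊥ : SimpleGraph Unit) (pathGraph (n - 1)))) := by
  haveI : NeZero n := ⟨by omega⟩
  show Xor' (HasDisjointPair G) _
  by_cases hp : HasDisjointPair G
  · refine Or.inl ⟨hp, ?_⟩
    rintro ⟨iso⟩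
    obtain ⟨k, hk⟩ := iso_apex iso
    obtain ⟨a, b, c, d, hb, hd, h1, h2, hac, had, hbc, hbd⟩ := hp
    have hb' : b = a + 2 := Fin.ext (by rw [val_add_two_mod hn]; exact hb)
    have hd' : d = c + 2 := Fin.ext (by rw [val_add_two_mod hn]; exact hd)
    subst hb'; subst hd'
    have m1 := twoedge_mem hn hG hk h1
    have m2 := twoedge_mem hn hG hk h2
    rcases m1 with m1 | m1 <;> rcases m2 with m2 | m2
    · exact hac (m1.symm.trans m2)
    · exact had (m1.symm.trans m2)
    · exact hbc (m1.symm.trans m2)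
    · exact hbd (m1.symm.trans m2)
  · refine Or.inr ⟨?_, hp⟩
    have hadj01 : G.Adj (1 : Fin n) 0 := by
      refine (hG.1 0 1 ?_).symm
      rw [val_one hn, val_zero']
      rw [Nat.mod_eq_of_lt (by omega)]
    have h10 : arcd (1 : Fin n) 0 = n - 1 := by
      unfold arcd
      rw [val_one hn, val_zero', if_neg (by omega)]
      omega
    obtain ⟨x, hx, -⟩ := ear hn hG (arcd (1 : Fin n) 0) 1 0 rfl (by rw [h10]; omega) hadj01
    have hne2 : x ≠ x + 2 := by
      have h2 := arcd_two hn x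
      intro h; rw [← h, arcd_self] at h2; omega
    have hxx : arcd (x + 2) x = n - 2 := by
      have h1 := arcd_comp hne2
      have h2 := arcd_two hn x
      omega
    obtain ⟨c, hc, hcb⟩ :=
      ear hn hG (arcd (x + 2) x) (x + 2) x rfl (by rw [hxx]; omega) hx.symm
    have hsh : x = c ∨ x = c + 2 ∨ x + 2 = c ∨ x + 2 = c + 2 := by
      by_contra h; push_neg at h
      exact hp ⟨x, x + 2, c, c + 2, val_add_two_mod hn x, val_add_two_mod hn c,
        hx, hc, h.1, h.2.1, h.2.2.1, h.2.2.2⟩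
    have hapex : ∃ k : Fin n, ∀ j, j ≠ k → G.Adj k j := by
      rcases hsh with h | h | h | h
      · exfalso
        rw [← h] at hcb
        rw [hxx] at hcb
        have := arcd_lt (x + 2) x
        omega
      · exact ⟨c + 2, apex_all hn hG hp hc (by rw [← h]; exact hx)⟩
      · exact ⟨x + 2, apex_all hn hG hp hx (by rw [h]; exact hc)⟩
      · exfalso
        have hxc : x = c := add_right_cancel h
        rw [← hxc] at hcb
        rw [hxx] at hcb
        omega
    obtain ⟨k, hk⟩ := hapex
    exact fan_iso hn hG hk
end
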